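/- Let K/k be a quadratic extension of number fields and let 𝔬_K¹ be the group of norm-one units. The group 𝔬_K¹ is infinite if and only if at least one archimedean place of k splits in K. -/

import Mathlib

open NumberField

open Polynomial in
theorem aux_normal (k K : Type*) [Field k] [Field K] [Algebra k K] [CharZero k]
    (h : Module.finrank k K = 2) : Normal k K := by
  have hfd : FiniteDimensional k K := Module.finite_of_finrank_pos (by omega)
  refine normal_iff.mpr fun x => ⟨Algebra.IsIntegral.isIntegral x, ?_⟩
  set p := (minpoly k x).map (algebraMap k K) with hp
  have hroot : p.IsRoot x := by
    simp [p, eval_map, ← aeval_def]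
  have hmonic : ((X : K[X]) - C x).Monic := monic_X_sub_C x
  have hfac : p = (X - C x) * (p /ₘ (X - C x)) := (mul_divByMonic_eq_iff_isRoot.mpr hroot).symm
  rw [hfac]
  refine Splits.mul (Splits.X_sub_C _) (Splits.of_natDegree_le_one ?_)
  have h2 : p.natDegree ≤ 2 := by
    rw [hp, natDegree_map]
    exact h ▸ minpoly.natDegree_le x
  have h3 := natDegree_divByMonic p hmonic
  rw [natDegree_X_sub_C] at h3
  omega


/-- For a quadratic extension `K/k` of number fields, the group of norm-one units of `𝓞 K`
is infinite if and only if at least one archimedean place of `k` splits in `K`, i.e. has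
two distinct places of `K` above it. -/
theorem stmt5 (k K : Type*) [Field k] [Field K] [NumberField k] [NumberField K]
    [Algebra k K] (hquad : Module.finrank k K = 2)
    (U : Subgroup (𝓞 K)ˣ)
    (hU : ∀ ε : (𝓞 K)ˣ, ε ∈ U ↔ Algebra.norm k ((ε : 𝓞 K) : K) = 1) :
    Infinite U ↔ ∃ (v : InfinitePlace k) (w₁ w₂ : InfinitePlace K), w₁ ≠ w₂ ∧
      w₁.comap (algebraMap k K) = v ∧ w₂.comap (algebraMap k K) = v := by
  classical
  have hfd : FiniteDimensional k K := Module.finite_of_finrank_pos (by rw [hquad]; norm_num)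
  have hnormal : Normal k K := aux_normal k K hquad
  have hgal : IsGalois k K := ⟨⟩
  have hcard : Fintype.card (K ≃ₐ[k] K) = 2 := by
    rw [Fintype.card_eq_nat_card, IsGalois.card_aut_eq_finrank, hquad]
  have hcomap : ∀ (σ : K ≃ₐ[k] K) (w : InfinitePlace K),
      (σ • w).comap (algebraMap k K) = w.comap (algebraMap k K) := by
    intro σ w
    rw [InfinitePlace.comap_smul]
    congr 1
    ext x
    simp
  constructor
  · -- Infinite → split
    intro hinf
    by_contra hsplit
    push_neg at hsplit
    have huniq : ∀ w w' : InfinitePlace K,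
        w.comap (algebraMap k K) = w'.comap (algebraMap k K) → w = w' := by
      intro w w' he
      by_contra hne
      exact hsplit (w.comap (algebraMap k K)) w w' hne rfl he.symm
    have htors : ∀ ε : (𝓞 K)ˣ, ε ∈ U → ε ∈ Units.torsion K := by
      intro ε hε
      rw [Units.mem_torsion]
      intro w
      have hn : Algebra.norm k ((ε : 𝓞 K) : K) = 1 := (hU ε).mp hε
      have h1 : algebraMap k K (Algebra.norm k ((ε : 𝓞 K) : K))
          = ∏ σ : K ≃ₐ[k] K, σ ((ε : 𝓞 K) : K) := Algebra.norm_eq_prod_automorphisms k _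
      rw [hn, map_one] at h1
      have h2 : (1 : ℝ) = ∏ σ : K ≃ₐ[k] K, w (σ ((ε : 𝓞 K) : K)) := by
        have h2' := congrArg w h1
        rw [map_one, map_prod] at h2'
        exact h2'
      have h3 : ∀ σ : K ≃ₐ[k] K, w (σ ((ε : 𝓞 K) : K)) = w ((ε : 𝓞 K) : K) := by
        intro σ
        have hww : σ⁻¹ • w = w := huniq _ _ (hcomap σ⁻¹ w)
        have hsa : (σ⁻¹ • w) ((ε : 𝓞 K) : K) = w (σ ((ε : 𝓞 K) : K)) := by
          have hss : σ⁻¹ = σ.symm := rfl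
          rw [InfinitePlace.smul_apply, hss, AlgEquiv.symm_symm]
        rw [← hsa, hww]
      rw [Finset.prod_congr rfl (fun σ _ => h3 σ), Finset.prod_const, Finset.card_univ,
        hcard] at h2
      have hnn : 0 ≤ w ((ε : 𝓞 K) : K) := w.1.nonneg _
      nlinarith [h2]
    have hfin : Finite U := by
      refine Finite.of_injective (fun u : U => (⟨u.1, htors u.1 u.2⟩ : Units.torsion K)) ?_
      intro a b hab
      simp only [Subtype.mk.injEq] at hab
      exact Subtype.ext hab
    exact (not_infinite_iff_finite.mpr hfin) hinf
  · rintro ⟨v, w₁, w₂, hne, h1, h2⟩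
    obtain ⟨σ, hσ⟩ := InfinitePlace.exists_smul_eq_of_comap_eq (h1.trans h2.symm)
    have hσne : σ ≠ 1 := by rintro rfl; rw [one_smul] at hσ; exact hne hσ
    have hσσ : σ * σ = 1 := by
      have hdvd := orderOf_dvd_card (x := σ)
      rw [hcard] at hdvd
      have h2' : orderOf σ = 2 := by
        rcases (Nat.dvd_prime Nat.prime_two).mp hdvd with h | h
        · exact absurd (orderOf_eq_one_iff.mp h) hσne
        · exact h
      have := pow_orderOf_eq_one σ
      rwa [h2', pow_two] at this
    have hinv : σ⁻¹ = σ := by rw [inv_eq_iff_mul_eq_one]; exact hσσ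
    obtain ⟨u, hu⟩ := NumberField.Units.dirichletUnitTheorem.exists_unit (K := K) w₁
    have hpos : ∀ w : InfinitePlace K, 0 < w (u : K) :=
      fun w => InfinitePlace.pos_iff.mpr (NumberField.Units.coe_ne_zero u)
    have hlt : ∀ w : InfinitePlace K, w ≠ w₁ → w (u : K) < 1 := by
      intro w hw
      exact (Real.log_neg_iff (hpos w)).mp (hu w hw)
    have hune : w₁ (u : K) ≠ w₂ (u : K) := by
      intro heq
      have hall : ∀ w : InfinitePlace K, w (u : K) ^ w.mult < 1 := by
        intro w
        have hwlt : w (u : K) < 1 := by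
          by_cases hw : w = w₁
          · rw [hw, heq]; exact hlt w₂ hne.symm
          · exact hlt w hw
        exact pow_lt_one₀ (le_of_lt (hpos w)) hwlt InfinitePlace.mult_ne_zero
      have hprod : ∏ w : InfinitePlace K, w (u : K) ^ w.mult = 1 := by
        rw [InfinitePlace.prod_eq_abs_norm, NumberField.Units.norm]
        norm_num
      have : ∏ w : InfinitePlace K, w (u : K) ^ w.mult < 1 := by
        calc ∏ w : InfinitePlace K, w (u : K) ^ w.mult
            < ∏ _w : InfinitePlace K, 1 := by
              refine Finset.prod_lt_prod_of_nonempty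
                (fun w _ => pow_pos (hpos w) _) (fun w _ => hall w) Finset.univ_nonempty
          _ = 1 := Finset.prod_const_one
      linarith [hprod]
    -- conjugate unit
    let su : (𝓞 K)ˣ := Units.map (RingOfIntegers.mapRingEquiv σ.toRingEquiv).toMonoidHom u
    have hsucoe : ((su : 𝓞 K) : K) = σ ((u : K)) := rfl
    set ε : (𝓞 K)ˣ := u * su⁻¹ with hε
    have hsuinv : (((su⁻¹ : (𝓞 K)ˣ) : 𝓞 K) : K) = (σ ((u : K)))⁻¹ := by
      rw [← hsucoe]
      have := NumberField.Units.coe_zpow su (-1)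
      simpa using this
    have hεcoe : ((ε : 𝓞 K) : K) = (u : K) * (σ ((u : K)))⁻¹ := by
      have hstep : ((ε : 𝓞 K) : K) = ((u : 𝓞 K) : K) * (((su⁻¹ : (𝓞 K)ˣ) : 𝓞 K) : K) := by
        rw [hε, Units.val_mul]
        push_cast
        ring
      rw [hstep, hsuinv]
    have hσu0 : σ ((u : K)) ≠ 0 := by
      simp [NumberField.Units.coe_ne_zero u]
    have hεnorm : Algebra.norm k ((ε : 𝓞 K) : K) = 1 := by
      rw [hεcoe, map_mul]
      have hmul : Algebra.norm k (σ ((u : K))) * Algebra.norm k ((σ ((u : K)))⁻¹) = 1 := by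
        rw [← map_mul, mul_inv_cancel₀ hσu0, map_one]
      rw [Algebra.norm_eq_of_algEquiv σ] at hmul
      have hn0 : Algebra.norm k ((u : K)) ≠ 0 := by
        rw [Algebra.norm_ne_zero_iff]
        exact NumberField.Units.coe_ne_zero u
      field_simp at hmul ⊢
      linear_combination hmul
    have hmem : ε ∈ U := (hU ε).mpr hεnorm
    have hw1σ : w₁ (σ ((u : K))) = w₂ ((u : K)) := by
      have : (σ⁻¹ • w₁) ((u : K)) = w₁ (σ ((u : K))) := by
        have hss : σ⁻¹ = σ.symm := rfl
        rw [InfinitePlace.smul_apply, hss, AlgEquiv.symm_symm]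
      rw [← this, hinv, hσ]
    have hw1ε : w₁ ((ε : 𝓞 K) : K) ≠ 1 := by
      rw [hεcoe, map_mul, map_inv₀, hw1σ]
      intro hcon
      apply hune
      field_simp at hcon
      linarith [hcon]
    have hnotfin : ¬ IsOfFinOrder ε := by
      intro hfin
      have : ε ∈ Units.torsion K := (CommGroup.mem_torsion _).mpr hfin
      exact hw1ε ((NumberField.Units.mem_torsion K).mp this w₁)
    have hnotfin' : ¬ IsOfFinOrder (⟨ε, hmem⟩ : U) := by
      intro h
      exact hnotfin (U.subtype.isOfFinOrder h)
    exact Infinite.of_injective _ (injective_zpow_iff_not_isOfFinOrder.mpr hnotfin')
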